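/- arXiv:1312.7658 — 2 statements merged into one kernel-verified Lean document; each statement's English description precedes it below -/
import Mathlib

section
/- If a sequence of vectors λ_n in ℝ^ℓ satisfies λ_0 = 0, n²‖λ_n‖² ≤ (n−1)²‖λ_{n−1}‖² + 2(n−1) λ_{n−1}·(r*_n − r_n) + ρ², and λ_{n−1}·(r*_n − r_n) ≤ 0 for all n ≥ 1, then ‖λ_n‖ ≤ ρ/√n for all n ≥ 1. -/
open scoped BigOperators

theorem stmt1 {ℓ : ℕ} (ρ : ℝ) (r rs lam : ℕ → EuclideanSpace ℝ (Fin ℓ))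
    (hρ : ∀ k, ‖rs k - r k‖ ≤ ρ)
    (hlam0 : lam 0 = 0)
    (hrec : ∀ n : ℕ, 1 ≤ n →
      (n : ℝ) ^ 2 * ‖lam n‖ ^ 2 ≤
        ((n : ℝ) - 1) ^ 2 * ‖lam (n - 1)‖ ^ 2
          + 2 * ((n : ℝ) - 1) * (inner ℝ (lam (n - 1)) (rs n - r n) : ℝ) + ρ ^ 2)
    (hneg : ∀ n : ℕ, 1 ≤ n → (inner ℝ (lam (n - 1)) (rs n - r n) : ℝ) ≤ 0) :
    ∀ n : ℕ, 1 ≤ n → ‖lam n‖ ≤ ρ / Real.sqrt n := by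
  have hρ0 : 0 ≤ ρ := le_trans (norm_nonneg _) (hρ 0)
  have key : ∀ n : ℕ, 1 ≤ n → (n : ℝ) ^ 2 * ‖lam n‖ ^ 2 ≤ n * ρ ^ 2 := by
    intro n hn
    induction n with
    | zero => omega
    | succ m ih =>
      rcases Nat.eq_or_lt_of_le hn with h1 | h1
      · have h := hrec 1 le_rfl
        simp [hlam0] at h
        have : m = 0 := by omega
        subst this
        simpa using h
      · have hm : 1 ≤ m := by omega
        have h := hrec (m + 1) (by omega)
        have hn' := hneg (m + 1) (by omega)
        simp only [Nat.add_sub_cancel, Nat.cast_add, Nat.cast_one, add_sub_cancel_right] at h hn'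
        have ihm := ih hm
        have hmn : 2 * (m : ℝ) * (inner ℝ (lam m) (rs (m+1) - r (m+1)) : ℝ) ≤ 0 := by
          have : (0:ℝ) ≤ 2 * m := by positivity
          exact mul_nonpos_of_nonneg_of_nonpos this hn'
        push_cast
        nlinarith
  intro n hn
  have hk := key n hn
  have hnpos : (0:ℝ) < n := by exact_mod_cast hn
  have h2 : ‖lam n‖ ^ 2 ≤ (ρ / Real.sqrt n) ^ 2 := by
    rw [div_pow, Real.sq_sqrt hnpos.le]
    rw [le_div_iff₀ hnpos]
    nlinarith
  have hrhs : 0 ≤ ρ / Real.sqrt n := by positivity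
  calc ‖lam n‖ = Real.sqrt (‖lam n‖ ^ 2) := by rw [Real.sqrt_sq (norm_nonneg _)]
    _ ≤ Real.sqrt ((ρ / Real.sqrt n) ^ 2) := Real.sqrt_le_sqrt h2
    _ = ρ / Real.sqrt n := Real.sqrt_sq hrhs
end

section
/- Let S ⊆ ℝ^ℓ be a closed convex set, and let (r_k), (r*_k) be sequences with r*_k ∈ S and ‖r*_k − r_k‖ ≤ ρ for all k, satisfying ((1/(n−1))Σ_{k<n}(r*_k − r_k)) · (r*_n − r_n) ≤ 0 for all n ≥ 2. Then the Euclidean distance of the average reward from S satisfies d((1/n)Σ_{k=1}^n r_k, S) ≤ ρ/√n for all n ≥ 1. -/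
open scoped BigOperators

theorem stmt2 {ℓ : ℕ} (ρ : ℝ) (S : Set (EuclideanSpace ℝ (Fin ℓ)))
    (hSclosed : IsClosed S) (hSconv : Convex ℝ S)
    (r rs : ℕ → EuclideanSpace ℝ (Fin ℓ))
    (hmem : ∀ k, rs k ∈ S)
    (hρ : ∀ k, ‖rs k - r k‖ ≤ ρ)
    (hsteer : ∀ n : ℕ, 2 ≤ n →
      (inner ℝ (((n : ℝ) - 1)⁻¹ • ∑ k ∈ Finset.Icc 1 (n - 1), (rs k - r k))
        (rs n - r n) : ℝ) ≤ 0) :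
    ∀ n : ℕ, 1 ≤ n →
      Metric.infDist ((n : ℝ)⁻¹ • ∑ k ∈ Finset.Icc 1 n, r k) S ≤ ρ / Real.sqrt n := by
  have hρ0 : 0 ≤ ρ := le_trans (norm_nonneg _) (hρ 0)
  set d : ℕ → EuclideanSpace ℝ (Fin ℓ) := fun k => rs k - r k with hd
  have key : ∀ n : ℕ, 1 ≤ n → ‖∑ k ∈ Finset.Icc 1 n, d k‖ ^ 2 ≤ n * ρ ^ 2 := by
    intro n hn
    induction n with
    | zero => omega
    | succ m ih =>
      rcases Nat.lt_or_ge m 1 with hm | hm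
      · interval_cases m
        simpa using pow_le_pow_left₀ (norm_nonneg _) (hρ 1) 2
      · have hsum : ∑ k ∈ Finset.Icc 1 (m + 1), d k
            = (∑ k ∈ Finset.Icc 1 m, d k) + d (m + 1) :=
          Finset.sum_Icc_succ_top (by omega) d
        have hst := hsteer (m + 1) (by omega)
        have hm1 : (m + 1 : ℕ) - 1 = m := by omega
        rw [hm1, real_inner_smul_left] at hst
        have hc : (0 : ℝ) < (((m + 1 : ℕ) : ℝ) - 1)⁻¹ := by
          push_cast
          simp only [add_sub_cancel_right]
          positivity
        have hinner : (inner ℝ (∑ k ∈ Finset.Icc 1 m, d k) (d (m + 1)) : ℝ) ≤ 0 := by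
          nlinarith [hst, hc]
        have hexp := norm_add_sq_real (∑ k ∈ Finset.Icc 1 m, d k) (d (m + 1))
        have hd1 : ‖d (m + 1)‖ ^ 2 ≤ ρ ^ 2 := pow_le_pow_left₀ (norm_nonneg _) (hρ (m + 1)) 2
        have hih := ih hm
        rw [hsum, hexp]
        push_cast
        nlinarith [hih, hd1, hinner]
  intro n hn
  have hn0 : (0 : ℝ) < n := by exact_mod_cast hn
  have havg : ((n : ℝ))⁻¹ • ∑ k ∈ Finset.Icc 1 n, rs k ∈ S := by
    have h := hSconv.sum_mem (t := Finset.Icc 1 n) (w := fun _ => (n : ℝ)⁻¹)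
      (fun i _ => by positivity)
      (by simp [Finset.sum_const, Nat.card_Icc]; field_simp)
      (fun i _ => hmem i)
    simpa [Finset.smul_sum] using h
  have hle := Metric.infDist_le_dist_of_mem
    (x := (n : ℝ)⁻¹ • ∑ k ∈ Finset.Icc 1 n, r k) havg
  refine hle.trans ?_
  have hnormd : ‖∑ k ∈ Finset.Icc 1 n, d k‖ ≤ Real.sqrt n * ρ := by
    have h := key n hn
    have := Real.sqrt_le_sqrt h
    rwa [Real.sqrt_sq (norm_nonneg _), show (n : ℝ) * ρ ^ 2 = (Real.sqrt n * ρ) ^ 2 by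
      rw [mul_pow, Real.sq_sqrt hn0.le], Real.sqrt_sq (by positivity)] at this
  have hdist : dist ((n : ℝ)⁻¹ • ∑ k ∈ Finset.Icc 1 n, r k)
      ((n : ℝ)⁻¹ • ∑ k ∈ Finset.Icc 1 n, rs k)
      = (n : ℝ)⁻¹ * ‖∑ k ∈ Finset.Icc 1 n, d k‖ := by
    rw [dist_eq_norm, ← smul_sub, norm_smul, ← Finset.sum_sub_distrib]
    simp only [hd]
    have hns : ∑ x ∈ Finset.Icc 1 n, (r x - rs x)
        = -∑ k ∈ Finset.Icc 1 n, (rs k - r k) := by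
      rw [← Finset.sum_neg_distrib]
      exact Finset.sum_congr rfl fun x _ => (neg_sub _ _).symm
    rw [hns, norm_neg, Real.norm_eq_abs, abs_of_pos (inv_pos.mpr hn0)]
  rw [hdist]
  have hsq : Real.sqrt n > 0 := Real.sqrt_pos.mpr hn0
  calc (n : ℝ)⁻¹ * ‖∑ k ∈ Finset.Icc 1 n, d k‖
      ≤ (n : ℝ)⁻¹ * (Real.sqrt n * ρ) := by
        exact mul_le_mul_of_nonneg_left hnormd (by positivity)
    _ = ρ / Real.sqrt n := by
        rw [eq_div_iff hsq.ne']
        field_simp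
        nlinarith [Real.mul_self_sqrt hn0.le, hsq]
end
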